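/- Let f : [0,1] × K → ℝ be such that for each p ∈ K, t ↦ f(t,p) is convex, and suppose f(·, p) is uniformly bounded. Then t ↦ ∫_K f(t,p) dμ(p) is convex and possesses left and right derivatives at every t ∈ (0,1), given by ∫_K ∂⁻_t f(t,p) dμ and ∫_K ∂⁺_t f(t,p) dμ respectively; moreover if for almost every p the left and right derivatives of f(·,p) at t coincide, then the integral is differentiable at t with derivative ∫_K ∂_t f(t,p) dμ(p). -/

import Mathlib

open MeasureTheory Set Filter

private lemma aux_right {g : ℝ → ℝ} (hg : ConvexOn ℝ (Icc (0:ℝ) 1) g) {t : ℝ}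
    (ht : t ∈ Ioo (0:ℝ) 1) :
    HasDerivWithinAt g (derivWithin g (Ici t) t) (Ici t) t ∧
      slope g t 0 ≤ derivWithin g (Ici t) t ∧ derivWithin g (Ici t) t ≤ slope g t 1 := by
  obtain ⟨ht0, ht1⟩ := ht
  have hmono := hg.slope_mono (⟨ht0.le, ht1.le⟩ : t ∈ Icc (0:ℝ) 1)
  have h0mem : (0:ℝ) ∈ Icc (0:ℝ) 1 \ {t} := ⟨⟨le_refl 0, zero_le_one⟩, ht0.ne⟩
  have h1mem : (1:ℝ) ∈ Icc (0:ℝ) 1 \ {t} := ⟨⟨zero_le_one, le_refl 1⟩, ht1.ne'⟩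
  have hsub : Ioo t 1 ⊆ Icc (0:ℝ) 1 \ {t} := fun s hs =>
    ⟨⟨(ht0.trans hs.1).le, hs.2.le⟩, hs.1.ne'⟩
  have hmono' : MonotoneOn (slope g t) (Ioo t 1) := hmono.mono hsub
  have hne : (Ioo t 1).Nonempty := nonempty_Ioo.2 ht1
  have hlb : ∀ x ∈ slope g t '' Ioo t 1, slope g t 0 ≤ x := by
    rintro _ ⟨s, hs, rfl⟩
    exact hmono h0mem (hsub hs) (ht0.trans hs.1).le
  have hbdd : BddBelow (slope g t '' Ioo t 1) := ⟨_, hlb⟩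
  have htend := hmono'.tendsto_nhdsWithin_Ioo_right hne hbdd
  have hL : HasDerivWithinAt g (sInf (slope g t '' Ioo t 1)) (Ici t) t := by
    rw [← hasDerivWithinAt_Ioi_iff_Ici, hasDerivWithinAt_iff_tendsto_slope' notMem_Ioi_self]
    exact htend
  have hD : derivWithin g (Ici t) t = sInf (slope g t '' Ioo t 1) :=
    hL.derivWithin (uniqueDiffOn_Ici t t self_mem_Ici)
  refine ⟨hD ▸ hL, ?_, ?_⟩
  · rw [hD]; exact le_csInf (hne.image _) hlb
  · rw [hD]
    have hmem : (t + 1)/2 ∈ Ioo t 1 := ⟨by linarith, by linarith⟩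
    exact (csInf_le hbdd (mem_image_of_mem _ hmem)).trans
      (hmono (hsub hmem) h1mem (by linarith [hmem.2]))

private lemma aux_left {g : ℝ → ℝ} (hg : ConvexOn ℝ (Icc (0:ℝ) 1) g) {t : ℝ}
    (ht : t ∈ Ioo (0:ℝ) 1) :
    HasDerivWithinAt g (derivWithin g (Iic t) t) (Iic t) t ∧
      slope g t 0 ≤ derivWithin g (Iic t) t ∧ derivWithin g (Iic t) t ≤ slope g t 1 := by
  obtain ⟨ht0, ht1⟩ := ht
  have hmono := hg.slope_mono (⟨ht0.le, ht1.le⟩ : t ∈ Icc (0:ℝ) 1)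
  have h0mem : (0:ℝ) ∈ Icc (0:ℝ) 1 \ {t} := ⟨⟨le_refl 0, zero_le_one⟩, ht0.ne⟩
  have h1mem : (1:ℝ) ∈ Icc (0:ℝ) 1 \ {t} := ⟨⟨zero_le_one, le_refl 1⟩, ht1.ne'⟩
  have hsub : Ioo 0 t ⊆ Icc (0:ℝ) 1 \ {t} := fun s hs =>
    ⟨⟨hs.1.le, (hs.2.trans ht1).le⟩, hs.2.ne⟩
  have hmono' : MonotoneOn (slope g t) (Ioo 0 t) := hmono.mono hsub
  have hne : (Ioo (0:ℝ) t).Nonempty := nonempty_Ioo.2 ht0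
  have hub : ∀ x ∈ slope g t '' Ioo 0 t, x ≤ slope g t 1 := by
    rintro _ ⟨s, hs, rfl⟩
    exact hmono (hsub hs) h1mem ((hs.2.trans ht1).le)
  have hbdd : BddAbove (slope g t '' Ioo 0 t) := ⟨_, hub⟩
  have htend := hmono'.tendsto_nhdsWithin_Ioo_left hne hbdd
  have hL : HasDerivWithinAt g (sSup (slope g t '' Ioo 0 t)) (Iic t) t := by
    rw [← hasDerivWithinAt_Iio_iff_Iic, hasDerivWithinAt_iff_tendsto_slope' notMem_Iio_self]
    exact htend
  have hD : derivWithin g (Iic t) t = sSup (slope g t '' Ioo 0 t) :=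
    hL.derivWithin (uniqueDiffOn_Iic t t self_mem_Iic)
  refine ⟨hD ▸ hL, ?_, ?_⟩
  · rw [hD]
    have hmem : t/2 ∈ Ioo (0:ℝ) t := ⟨by linarith, by linarith⟩
    exact (hmono h0mem (hsub hmem) (by linarith [hmem.1])).trans
      (le_csSup hbdd (mem_image_of_mem _ hmem))
  · rw [hD]; exact csSup_le (hne.image _) hub

private lemma aux_bound {g : ℝ → ℝ} {C t : ℝ} (hb : ∀ s ∈ Icc (0:ℝ) 1, |g s| ≤ C)
    (ht : t ∈ Ioo (0:ℝ) 1) {D : ℝ} (h1 : slope g t 0 ≤ D) (h2 : D ≤ slope g t 1) :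
    |D| ≤ 2*C/t + 2*C/(1 - t) := by
  obtain ⟨ht0, ht1⟩ := ht
  have hC : 0 ≤ C := (abs_nonneg _).trans (hb 0 ⟨le_refl 0, zero_le_one⟩)
  have hg0 := hb 0 ⟨le_refl 0, zero_le_one⟩
  have hg1 := hb 1 ⟨zero_le_one, le_refl 1⟩
  have hgt := hb t ⟨ht0.le, ht1.le⟩
  have e1 : |slope g t 0| ≤ 2*C/t := by
    rw [slope_def_field, abs_div, show |(0:ℝ) - t| = t by rw [abs_of_nonpos (by linarith)]; ring]
    gcongr
    rw [abs_le] at hg0 hgt ⊢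
    constructor <;> linarith
  have e2 : |slope g t 1| ≤ 2*C/(1 - t) := by
    rw [slope_def_field, abs_div, show |(1:ℝ) - t| = 1 - t by rw [abs_of_nonneg (by linarith)]]
    gcongr
    · rw [abs_le] at hg1 hgt ⊢
      constructor <;> linarith
  have p1 : 0 ≤ 2*C/t := div_nonneg (by linarith) ht0.le
  have p2 : 0 ≤ 2*C/(1 - t) := div_nonneg (by linarith) (by linarith)
  rw [abs_le]
  constructor
  · linarith [neg_abs_le (slope g t 0)]
  · linarith [le_abs_self (slope g t 1)]


private lemma aux_slope_bound {g : ℝ → ℝ} {C t : ℝ} (hg : ConvexOn ℝ (Icc (0:ℝ) 1) g)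
    (hb : ∀ s ∈ Icc (0:ℝ) 1, |g s| ≤ C) (ht : t ∈ Ioo (0:ℝ) 1) {s : ℝ}
    (hs : s ∈ Icc (0:ℝ) 1) (hst : s ≠ t) :
    |slope g t s| ≤ 2*C/t + 2*C/(1 - t) := by
  have hmono := hg.slope_mono (⟨ht.1.le, ht.2.le⟩ : t ∈ Icc (0:ℝ) 1)
  have h0mem : (0:ℝ) ∈ Icc (0:ℝ) 1 \ {t} := ⟨⟨le_refl 0, zero_le_one⟩, ht.1.ne⟩
  have h1mem : (1:ℝ) ∈ Icc (0:ℝ) 1 \ {t} := ⟨⟨zero_le_one, le_refl 1⟩, ht.2.ne'⟩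
  exact aux_bound hb ht (hmono h0mem ⟨hs, hst⟩ hs.1) (hmono ⟨hs, hst⟩ h1mem hs.2)


/-- Differentiating an integral of convex functions of a parameter: if
`t ↦ f t p` is convex on `[0,1]` for each `p`, uniformly bounded and
measurable, then `g t = ∫ p, f t p dμ` is convex; at each interior `t` it has
left/right derivatives equal to the integrals of the pointwise left/right
derivatives, and it is differentiable whenever these coincide a.e. -/
theorem stmt18 {K : Type*} [MeasurableSpace K] (μ : Measure K)
    [IsFiniteMeasure μ] (f : ℝ → K → ℝ)
    (hconv : ∀ p, ConvexOn ℝ (Icc (0:ℝ) 1) (fun t => f t p))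
    (hmeas : ∀ t ∈ Icc (0:ℝ) 1, AEStronglyMeasurable (f t) μ)
    (C : ℝ) (hbdd : ∀ t ∈ Icc (0:ℝ) 1, ∀ p, |f t p| ≤ C) :
    ConvexOn ℝ (Icc (0:ℝ) 1) (fun t => ∫ p, f t p ∂μ) ∧
    (∀ t ∈ Ioo (0:ℝ) 1,
      HasDerivWithinAt (fun s => ∫ p, f s p ∂μ)
        (∫ p, derivWithin (fun s => f s p) (Iic t) t ∂μ) (Iic t) t ∧
      HasDerivWithinAt (fun s => ∫ p, f s p ∂μ)
        (∫ p, derivWithin (fun s => f s p) (Ici t) t ∂μ) (Ici t) t) ∧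
    (∀ t ∈ Ioo (0:ℝ) 1,
      (∀ᵐ p ∂μ, derivWithin (fun s => f s p) (Iic t) t =
        derivWithin (fun s => f s p) (Ici t) t) →
      HasDerivAt (fun s => ∫ p, f s p ∂μ)
        (∫ p, derivWithin (fun s => f s p) (Ici t) t ∂μ) t) := by
  have hint : ∀ t ∈ Icc (0:ℝ) 1, Integrable (f t) μ := fun t ht =>
    ⟨hmeas t ht, HasFiniteIntegral.of_bounded (C := C)
      (ae_of_all _ fun p => by simpa [Real.norm_eq_abs] using hbdd t ht p)⟩
  have key : ∀ t ∈ Ioo (0:ℝ) 1,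
      HasDerivWithinAt (fun s => ∫ p, f s p ∂μ)
        (∫ p, derivWithin (fun s => f s p) (Iic t) t ∂μ) (Iic t) t ∧
      HasDerivWithinAt (fun s => ∫ p, f s p ∂μ)
        (∫ p, derivWithin (fun s => f s p) (Ici t) t ∂μ) (Ici t) t := by
    intro t ht
    obtain ⟨ht0, ht1⟩ := ht
    set B : ℝ := 2*C/t + 2*C/(1 - t) with hB
    have hcong : ∀ s, s ∈ Icc (0:ℝ) 1 → s ≠ t →
        (∫ p, slope (fun u => f u p) t s ∂μ) = slope (fun u => ∫ p, f u p ∂μ) t s := by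
      intro s hs _
      calc (∫ p, slope (fun u => f u p) t s ∂μ)
          = ∫ p, (f s p - f t p) / (s - t) ∂μ := by
            simp only [slope_def_field]
        _ = (∫ p, (f s p - f t p) ∂μ) / (s - t) := integral_div _ _
        _ = ((∫ p, f s p ∂μ) - ∫ p, f t p ∂μ) / (s - t) := by
            rw [integral_sub (hint s hs) (hint t ⟨ht0.le, ht1.le⟩)]
        _ = slope (fun u => ∫ p, f u p ∂μ) t s := (slope_def_field (fun u => ∫ p, f u p ∂μ) t s).symm
    constructor
    · -- left derivative
      rw [← hasDerivWithinAt_Iio_iff_Iic, hasDerivWithinAt_iff_tendsto_slope' notMem_Iio_self]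
      have hDCT := tendsto_integral_filter_of_dominated_convergence (μ := μ)
        (l := nhdsWithin t (Iio t)) (F := fun s p => slope (fun u => f u p) t s)
        (f := fun p => derivWithin (fun s => f s p) (Iic t) t) (bound := fun _ => B)
        ?_ ?_ (integrable_const B) ?_
      · refine hDCT.congr' ?_
        filter_upwards [Ioo_mem_nhdsLT ht0] with s hs
        · exact hcong s ⟨hs.1.le, (hs.2.trans ht1).le⟩ hs.2.ne
      · filter_upwards [Ioo_mem_nhdsLT ht0] with s hs
        simp only [slope_def_field, div_eq_mul_inv]
        exact ((hmeas s ⟨hs.1.le, (hs.2.trans ht1).le⟩).sub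
          (hmeas t ⟨ht0.le, ht1.le⟩)).mul_const _
      · filter_upwards [Ioo_mem_nhdsLT ht0] with s hs
        refine ae_of_all _ fun p => ?_
        rw [Real.norm_eq_abs]
        exact aux_slope_bound (hconv p) (fun u hu => hbdd u hu p) ⟨ht0, ht1⟩
          ⟨hs.1.le, (hs.2.trans ht1).le⟩ hs.2.ne
      · refine ae_of_all _ fun p => ?_
        have := (aux_left (hconv p) ⟨ht0, ht1⟩).1
        rw [← hasDerivWithinAt_Iio_iff_Iic,
          hasDerivWithinAt_iff_tendsto_slope' notMem_Iio_self] at this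
        exact this
    · -- right derivative
      rw [← hasDerivWithinAt_Ioi_iff_Ici, hasDerivWithinAt_iff_tendsto_slope' notMem_Ioi_self]
      have hDCT := tendsto_integral_filter_of_dominated_convergence (μ := μ)
        (l := nhdsWithin t (Ioi t)) (F := fun s p => slope (fun u => f u p) t s)
        (f := fun p => derivWithin (fun s => f s p) (Ici t) t) (bound := fun _ => B)
        ?_ ?_ (integrable_const B) ?_
      · refine hDCT.congr' ?_
        filter_upwards [Ioo_mem_nhdsGT ht1] with s hs
        · exact hcong s ⟨(ht0.trans hs.1).le, hs.2.le⟩ hs.1.ne'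
      · filter_upwards [Ioo_mem_nhdsGT ht1] with s hs
        simp only [slope_def_field, div_eq_mul_inv]
        exact ((hmeas s ⟨(ht0.trans hs.1).le, hs.2.le⟩).sub
          (hmeas t ⟨ht0.le, ht1.le⟩)).mul_const _
      · filter_upwards [Ioo_mem_nhdsGT ht1] with s hs
        refine ae_of_all _ fun p => ?_
        rw [Real.norm_eq_abs]
        exact aux_slope_bound (hconv p) (fun u hu => hbdd u hu p) ⟨ht0, ht1⟩
          ⟨(ht0.trans hs.1).le, hs.2.le⟩ hs.1.ne'
      · refine ae_of_all _ fun p => ?_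
        have := (aux_right (hconv p) ⟨ht0, ht1⟩).1
        rw [← hasDerivWithinAt_Ioi_iff_Ici,
          hasDerivWithinAt_iff_tendsto_slope' notMem_Ioi_self] at this
        exact this
  refine ⟨⟨convex_Icc 0 1, ?_⟩, key, ?_⟩
  · intro x hx y hy a b ha hb' hab
    simp only [smul_eq_mul]
    have hxy : a * x + b * y ∈ Icc (0:ℝ) 1 := by
      have := (convex_Icc (0:ℝ) 1) hx hy ha hb' hab
      simpa using this
    calc (∫ p, f (a * x + b * y) p ∂μ)
        ≤ ∫ p, a * f x p + b * f y p ∂μ := by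
          refine integral_mono (hint _ hxy)
            (((hint x hx).const_mul a).add ((hint y hy).const_mul b)) fun p => ?_
          have := (hconv p).2 hx hy ha hb' hab
          simpa [smul_eq_mul] using this
      _ = a * (∫ p, f x p ∂μ) + b * ∫ p, f y p ∂μ := by
          rw [integral_add ((hint x hx).const_mul a) ((hint y hy).const_mul b),
            integral_const_mul, integral_const_mul]
  · intro t ht hae
    obtain ⟨hleft, hright⟩ := key t ht
    have heq : (∫ p, derivWithin (fun s => f s p) (Iic t) t ∂μ)
        = ∫ p, derivWithin (fun s => f s p) (Ici t) t ∂μ := integral_congr_ae hae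
    rw [heq] at hleft
    have := hleft.union hright
    rw [Iic_union_Ici] at this
    exact this.hasDerivAt (by simp)
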